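/- Let p be a rational prime, K a number field, and j a positive integer. Suppose ε is a unit of O_K with ε ≠ 1 and ε ≡ 1 (mod p^{j+1}·O_K). Then there exists x ∈ O_K such that for every integer n coprime to p, there is no unit δ of O_K satisfying (ε - 1)·p^j·n·x ≡ δ - 1 (mod p^{j+1}·(ε - 1)·O_K). -/

import Mathlib

set_option synthInstance.maxHeartbeats 1000000
set_option maxHeartbeats 4000000

noncomputable section

open NumberField

namespace Stmt10Aux

variable {K : Type} [Field K] [NumberField K]

lemma nat_mem_span_sub_one (η : (𝓞 K)ˣ) (hη : (η : 𝓞 K) ≠ 1) (m : ℕ)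
    (hm : (η : 𝓞 K) ^ m = 1) :
    (m : 𝓞 K) ∈ Ideal.span {(η : 𝓞 K) - 1} := by
  have h1 : (∑ i ∈ Finset.range m, (η : 𝓞 K) ^ i) * ((η : 𝓞 K) - 1) = 0 := by
    rw [geom_sum_mul, hm, sub_self]
  have h2 : (∑ i ∈ Finset.range m, (η : 𝓞 K) ^ i) = 0 := by
    rcases mul_eq_zero.mp h1 with h | h
    · exact h
    · exact absurd (sub_eq_zero.mp h) hη
  have h3 : (m : 𝓞 K) = ∑ i ∈ Finset.range m, ((1 : 𝓞 K) - (η : 𝓞 K) ^ i) := by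
    rw [Finset.sum_sub_distrib, h2, sub_zero, Finset.sum_const, Finset.card_range,
      nsmul_eq_mul, mul_one]
  rw [h3]
  refine Ideal.sum_mem _ (fun i _ => ?_)
  have : ((η : 𝓞 K) - 1) ∣ ((η : 𝓞 K) ^ i - 1) :=
    Dvd.intro_left _ (geom_sum_mul (η : 𝓞 K) i)
  have h4 : (1 : 𝓞 K) - (η : 𝓞 K) ^ i = -((η : 𝓞 K) ^ i - 1) := by ring
  rw [h4]
  exact neg_mem (Ideal.mem_span_singleton.mpr this)

lemma dvd_of_int_mem_span (p : ℕ) (hp : p.Prime) (t : ℤ)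
    (h : (t : 𝓞 K) ∈ Ideal.span {(p : 𝓞 K)}) : (p : ℤ) ∣ t := by
  obtain ⟨r, hr⟩ := Ideal.mem_span_singleton.mp h
  have b := RingOfIntegers.basis K
  haveI : Nonempty (Module.Free.ChooseBasisIndex ℤ (𝓞 K)) := b.index_nonempty
  set D := Fintype.card (Module.Free.ChooseBasisIndex ℤ (𝓞 K)) with hD
  have hD1 : 0 < D := Fintype.card_pos
  have hnt : Algebra.norm ℤ ((t : ℤ) : 𝓞 K) = t ^ D := by
    have := Algebra.norm_algebraMap_of_basis b (t : ℤ)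
    simpa using this
  have hnp : Algebra.norm ℤ ((p : ℤ) : 𝓞 K) = (p : ℤ) ^ D := by
    have := Algebra.norm_algebraMap_of_basis b ((p : ℕ) : ℤ)
    simpa using this
  have key : t ^ D = (p : ℤ) ^ D * Algebra.norm ℤ r := by
    have : ((t : ℤ) : 𝓞 K) = ((p : ℤ) : 𝓞 K) * r := by push_cast; exact_mod_cast hr
    calc t ^ D = Algebra.norm ℤ ((t : ℤ) : 𝓞 K) := hnt.symm
    _ = Algebra.norm ℤ (((p : ℤ) : 𝓞 K) * r) := by rw [this]
    _ = Algebra.norm ℤ ((p : ℤ) : 𝓞 K) * Algebra.norm ℤ r := by rw [map_mul]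
    _ = (p : ℤ) ^ D * Algebra.norm ℤ r := by rw [hnp]
  have hpp : Prime (p : ℤ) := Nat.prime_iff_prime_int.mp hp
  have : (p : ℤ) ∣ t ^ D := ⟨(p : ℤ) ^ (D - 1) * Algebra.norm ℤ r, by
    rw [key, ← mul_assoc, ← pow_succ']
    congr 2
    omega⟩
  exact hpp.dvd_of_dvd_pow this

lemma eq_one_of_finOrder (p : ℕ) (hp : p.Prime) (δ : (𝓞 K)ˣ)
    (hδ : ((δ : 𝓞 K) - 1) ∈ Ideal.span {((p : 𝓞 K)) ^ 2}) (hfin : IsOfFinOrder δ) :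
    δ = 1 := by
  by_contra hne
  have hval : (δ : 𝓞 K) ≠ 1 := fun h => hne (Units.ext h)
  set t := orderOf δ with ht
  have ht0 : 0 < t := hfin.orderOf_pos
  have hsub : Ideal.span {((δ : 𝓞 K) - 1)} ≤ Ideal.span {((p : 𝓞 K)) ^ 2} :=
    Ideal.span_singleton_le_span_singleton.mpr (Ideal.mem_span_singleton.mp hδ)
  have hsub2 : Ideal.span {((p : 𝓞 K)) ^ 2} ≤ Ideal.span {(p : 𝓞 K)} :=
    Ideal.span_singleton_le_span_singleton.mpr (dvd_pow_self _ two_ne_zero)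
  -- p ∣ t
  have htm : ((t : ℕ) : 𝓞 K) ∈ Ideal.span {(p : 𝓞 K)} := by
    refine hsub2 (hsub (nat_mem_span_sub_one δ hval t ?_))
    rw [← Units.val_pow_eq_pow_val, pow_orderOf_eq_one, Units.val_one]
  have hpt : p ∣ t := by
    have := dvd_of_int_mem_span p hp (t : ℤ) (by exact_mod_cast htm)
    exact_mod_cast this
  -- pass to an element of order p
  set δ' := δ ^ (t / p) with hδ'
  have horder : orderOf δ' = p := by
    have htp0 : t / p ≠ 0 := (Nat.div_pos (Nat.le_of_dvd ht0 hpt) hp.pos).ne'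
    rw [hδ', orderOf_pow' _ htp0, ← ht, Nat.gcd_eq_right (Nat.div_dvd_of_dvd hpt),
      Nat.div_div_self hpt ht0.ne']
  have hδ'ne : (δ' : 𝓞 K) ≠ 1 := by
    intro h
    have : δ' = 1 := Units.ext h
    rw [this, orderOf_one] at horder
    exact hp.one_lt.ne horder
  have hδ'mem : ((δ' : 𝓞 K) - 1) ∈ Ideal.span {((p : 𝓞 K)) ^ 2} := by
    refine hsub (Ideal.mem_span_singleton.mpr ?_)
    have : (δ' : 𝓞 K) = (δ : 𝓞 K) ^ (t / p) := by rw [hδ', Units.val_pow_eq_pow_val]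
    rw [this]
    exact Dvd.intro_left _ (geom_sum_mul (δ : 𝓞 K) (t / p))
  have hpmem : ((p : ℕ) : 𝓞 K) ∈ Ideal.span {((p : 𝓞 K)) ^ 2} := by
    refine (Ideal.span_singleton_le_span_singleton.mpr
      (Ideal.mem_span_singleton.mp hδ'mem)) (nat_mem_span_sub_one δ' hδ'ne p ?_)
    rw [← Units.val_pow_eq_pow_val, ← horder, pow_orderOf_eq_one, Units.val_one]
  -- p ∈ (p^2) gives 1 ∈ (p), contradiction
  obtain ⟨r, hr⟩ := Ideal.mem_span_singleton.mp hpmem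
  have hp0 : ((p : ℕ) : 𝓞 K) ≠ 0 := by
    exact_mod_cast Nat.cast_ne_zero.mpr hp.pos.ne'
  have h1 : (1 : 𝓞 K) = (p : 𝓞 K) * r := by
    exact mul_left_cancel₀ hp0 (by linear_combination hr)
  have : ((1 : ℤ) : 𝓞 K) ∈ Ideal.span {(p : 𝓞 K)} := by
    rw [Int.cast_one, h1]
    exact Ideal.mem_span_singleton.mpr ⟨r, rfl⟩
  have := dvd_of_int_mem_span p hp 1 this
  have h4 := Int.le_of_dvd one_pos this
  have h5 := hp.one_lt
  omega


/-- The subgroup of units congruent to 1 mod the principal ideal (g). -/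
def U (g : 𝓞 K) : Subgroup (𝓞 K)ˣ where
  carrier := {δ | ((δ : 𝓞 K) - 1) ∈ Ideal.span {g}}
  one_mem' := by simp
  mul_mem' := by
    intro a b ha hb
    have : ((a * b : (𝓞 K)ˣ) : 𝓞 K) - 1 = ((a : 𝓞 K) - 1) * (b : 𝓞 K) + ((b : 𝓞 K) - 1) := by
      rw [Units.val_mul]; ring
    simp only [Set.mem_setOf_eq] at *
    rw [this]
    exact Ideal.add_mem _ (Ideal.mul_mem_right _ _ ha) hb
  inv_mem' := by
    intro a ha
    have : ((a⁻¹ : (𝓞 K)ˣ) : 𝓞 K) - 1 = -(((a : 𝓞 K) - 1) * (a⁻¹ : (𝓞 K)ˣ)) := by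
      have h : (a : 𝓞 K) * ((a⁻¹ : (𝓞 K)ˣ) : 𝓞 K) = 1 := a.mul_inv
      linear_combination h
    simp only [Set.mem_setOf_eq] at *
    rw [this]
    exact neg_mem (Ideal.mul_mem_right _ _ ha)

lemma mem_U {g : 𝓞 K} {δ : (𝓞 K)ˣ} : δ ∈ U g ↔ ((δ : 𝓞 K) - 1) ∈ Ideal.span {g} := Iff.rfl

/-- A witness `w` with `δ - 1 = g * w`. -/
def wfun (g : 𝓞 K) (δ : U g) : 𝓞 K := (Ideal.mem_span_singleton.mp δ.2).choose

lemma wfun_spec (g : 𝓞 K) (δ : U g) :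
    ((δ : (𝓞 K)ˣ) : 𝓞 K) - 1 = g * wfun g δ := (Ideal.mem_span_singleton.mp δ.2).choose_spec

lemma wfun_eq {g : 𝓞 K} (hg : g ≠ 0) (δ : U g) (w : 𝓞 K)
    (h : ((δ : (𝓞 K)ˣ) : 𝓞 K) - 1 = g * w) : wfun g δ = w :=
  mul_left_cancel₀ hg ((wfun_spec g δ).symm.trans h)

/-- The map `δ ↦ (δ - 1)/g mod p`. -/
def phi (p : ℕ) (g : 𝓞 K) (a : Additive (U (K := K) g)) :
    𝓞 K ⧸ Ideal.span {(p : 𝓞 K)} :=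
  Ideal.Quotient.mk _ (wfun g a.toMul)

lemma phi_add (p : ℕ) {g : 𝓞 K} (hg : g ≠ 0) (hgp : (p : 𝓞 K) ∣ g)
    (a b : Additive (U (K := K) g)) :
    phi p g (a + b) = phi p g a + phi p g b := by
  set x := a.toMul with hx
  set y := b.toMul with hy
  have hxy : (a + b).toMul = x * y := rfl
  have hw : wfun g ((a + b).toMul) = wfun g x + wfun g y + g * (wfun g x * wfun g y) := by
    refine wfun_eq hg _ _ ?_
    have h1 := wfun_spec g x
    have h2 := wfun_spec g y
    have h3 : ((((a + b).toMul : (𝓞 K)ˣ)) : 𝓞 K) = (x : (𝓞 K)ˣ) * (y : (𝓞 K)ˣ) := by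
      rw [hxy]; rfl
    rw [h3]
    linear_combination ((y : (𝓞 K)ˣ) : 𝓞 K) * h1 + (1 + g * wfun g x) * h2
  show Ideal.Quotient.mk _ (wfun g ((a+b).toMul)) = _
  rw [hw]
  have hz : (Ideal.Quotient.mk (Ideal.span {(p : 𝓞 K)})) (g * (wfun g x * wfun g y)) = 0 := by
    rw [Ideal.Quotient.eq_zero_iff_mem]
    exact Ideal.mul_mem_right _ _ (Ideal.mem_span_singleton.mpr hgp)
  rw [map_add, map_add, hz, add_zero]
  rfl

end Stmt10Aux
theorem stmt10 (p : ℕ) (hp : p.Prime) (K : Type) [Field K] [NumberField K]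
    (j : ℕ) (hj : 0 < j) (ε : (𝓞 K)ˣ) (hε1 : (ε : 𝓞 K) ≠ 1)
    (hεcong : (ε : 𝓞 K) - 1 ∈ Ideal.span {(p : 𝓞 K) ^ (j + 1)}) :
    ∃ x : 𝓞 K, ∀ n : ℤ, IsCoprime n (p : ℤ) →
      ¬ ∃ δ : (𝓞 K)ˣ,
          ((ε : 𝓞 K) - 1) * (p : 𝓞 K) ^ j * (n : 𝓞 K) * x - ((δ : 𝓞 K) - 1)
            ∈ Ideal.span {(p : 𝓞 K) ^ (j + 1) * ((ε : 𝓞 K) - 1)} := by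
  classical
  by_contra hcon
  push_neg at hcon
  have hpK : ((p : ℕ) : 𝓞 K) ≠ 0 := Nat.cast_ne_zero.mpr hp.pos.ne'
  have he : ((ε : 𝓞 K) - 1) ≠ 0 := sub_ne_zero.mpr hε1
  set g : 𝓞 K := (p : 𝓞 K) ^ j * ((ε : 𝓞 K) - 1) with hgdef
  have hg0 : g ≠ 0 := mul_ne_zero (pow_ne_zero _ hpK) he
  have hgp : (p : 𝓞 K) ∣ g :=
    (dvd_pow_self (p : 𝓞 K) hj.ne').mul_right _
  obtain ⟨c, hc⟩ := Ideal.mem_span_singleton.mp hεcong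
  have hgp2 : ((p : 𝓞 K)) ^ 2 ∣ g := by
    refine ⟨(p : 𝓞 K) ^ (2 * j - 1) * c, ?_⟩
    have hexp : j + (j + 1) = 2 + (2 * j - 1) := by omega
    rw [hgdef, hc, ← mul_assoc, ← pow_add, hexp, pow_add, mul_assoc]
  have hsubg2 : Ideal.span {g} ≤ Ideal.span {((p : 𝓞 K)) ^ 2} :=
    Ideal.span_singleton_le_span_singleton.mpr hgp2
  set mkp := Ideal.Quotient.mk (Ideal.span {(p : 𝓞 K)}) with hmkp
  -- zsmul by p is zero in the quotient
  have hzero : ∀ v : 𝓞 K ⧸ Ideal.span {(p : 𝓞 K)}, (p : ℤ) • v = 0 := by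
    intro v
    rw [zsmul_eq_mul]
    have h0 : (((p : ℕ) : ℤ) : 𝓞 K ⧸ Ideal.span {(p : 𝓞 K)}) = 0 := by
      rw [← map_intCast mkp, Ideal.Quotient.eq_zero_iff_mem]
      push_cast
      exact Ideal.mem_span_singleton_self _
    rw [h0, zero_mul]
  -- the key consequence of `hcon`
  have hkey : ∀ x : 𝓞 K, ∃ n : ℤ, IsCoprime n (p : ℤ) ∧
      ∃ δ : Stmt10Aux.U (K := K) g, mkp (Stmt10Aux.wfun g δ) = n • mkp x := by
    intro x
    obtain ⟨n, hn, δ, hmem⟩ := hcon x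
    obtain ⟨s, hs⟩ := Ideal.mem_span_singleton.mp hmem
    have heq : (δ : 𝓞 K) - 1 = g * ((n : 𝓞 K) * x - (p : 𝓞 K) * s) := by
      rw [hgdef]
      linear_combination -hs
    have hδU : δ ∈ Stmt10Aux.U (K := K) g :=
      Stmt10Aux.mem_U.mpr (Ideal.mem_span_singleton.mpr ⟨_, heq⟩)
    refine ⟨n, hn, ⟨δ, hδU⟩, ?_⟩
    rw [Stmt10Aux.wfun_eq hg0 ⟨δ, hδU⟩ _ heq]
    rw [map_sub]
    have h1 : mkp ((p : 𝓞 K) * s) = 0 :=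
      Ideal.Quotient.eq_zero_iff_mem.mpr
        (Ideal.mul_mem_right _ _ (Ideal.mem_span_singleton_self _))
    rw [h1, sub_zero, zsmul_eq_mul, map_mul, map_intCast]
  -- the homomorphism φ
  let φ : Additive (Stmt10Aux.U (K := K) g) →+ 𝓞 K ⧸ Ideal.span {(p : 𝓞 K)} :=
    AddMonoidHom.mk' (Stmt10Aux.phi p g) (Stmt10Aux.phi_add p hg0 hgp)
  have hφsurj : Function.Surjective φ := by
    intro v
    obtain ⟨x, hx⟩ := Ideal.Quotient.mk_surjective v
    obtain ⟨n, hn, δ, hδkey⟩ := hkey x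
    obtain ⟨a, b, hab⟩ := hn
    refine ⟨a • Additive.ofMul δ, ?_⟩
    have hφδ : φ (Additive.ofMul δ) = n • v := by
      rw [← hx]; exact hδkey
    rw [map_zsmul, hφδ, smul_smul]
    have h2 : (a * n) • v + (b * (p : ℤ)) • v = v := by
      rw [← add_smul, hab, one_smul]
    have h3 : (b * (p : ℤ)) • v = 0 := by rw [mul_smul, hzero, smul_zero]
    rw [h3, add_zero] at h2
    exact h2
  -- the injection into units mod torsion
  let ι : Additive (Stmt10Aux.U (K := K) g) →+
      Additive ((𝓞 K)ˣ ⧸ NumberField.Units.torsion K) :=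
    AddMonoidHom.mk'
      (fun a => Additive.ofMul
        ((QuotientGroup.mk' (NumberField.Units.torsion K)) ((a.toMul : (𝓞 K)ˣ))))
      (fun a b => by
        have h0 : (((a + b).toMul : Stmt10Aux.U (K := K) g) : (𝓞 K)ˣ)
            = ((a.toMul : (𝓞 K)ˣ)) * ((b.toMul : (𝓞 K)ˣ)) := rfl
        show Additive.ofMul ((QuotientGroup.mk' (NumberField.Units.torsion K))
          (((a + b).toMul : Stmt10Aux.U (K := K) g) : (𝓞 K)ˣ)) = _
        rw [h0, map_mul]
        rfl)
  have hιinj : Function.Injective (AddMonoidHom.toIntLinearMap (M := Additive (Stmt10Aux.U (K := K) g)) (M₂ := Additive ((𝓞 K)ˣ ⧸ NumberField.Units.torsion K)) ι) := by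
    intro a b hab
    have h1 : (QuotientGroup.mk ((a.toMul : (𝓞 K)ˣ)) :
        (𝓞 K)ˣ ⧸ NumberField.Units.torsion K) = QuotientGroup.mk ((b.toMul : (𝓞 K)ˣ)) :=
      Additive.ofMul.injective hab
    have h2 := QuotientGroup.eq.mp h1
    set δu : Stmt10Aux.U (K := K) g := (a.toMul)⁻¹ * b.toMul with hδu
    have h3 : IsOfFinOrder ((δu : (𝓞 K)ˣ)) := by
      rw [NumberField.Units.torsion, CommGroup.mem_torsion] at h2
      exact h2
    have h5 : (((δu : (𝓞 K)ˣ)) : 𝓞 K) - 1 ∈ Ideal.span {((p : 𝓞 K)) ^ 2} :=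
      hsubg2 (Stmt10Aux.mem_U.mp δu.2)
    have h9 := Stmt10Aux.eq_one_of_finOrder p hp _ h5 h3
    have h10 : δu = 1 := Subtype.ext h9
    rw [hδu] at h10
    have h11 : a.toMul = b.toMul := inv_mul_eq_one.mp h10
    exact Additive.toMul.injective h11
  -- basis of the image submodule
  obtain ⟨m, bN⟩ := Submodule.basisOfPid (NumberField.Units.basisModTorsion K)
    (LinearMap.range (AddMonoidHom.toIntLinearMap (M := Additive (Stmt10Aux.U (K := K) g)) (M₂ := Additive ((𝓞 K)ˣ ⧸ NumberField.Units.torsion K)) ι))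
  have hm : m ≤ NumberField.Units.rank K := by
    simpa using Module.Basis.card_le_card_of_submodule (LinearMap.range (AddMonoidHom.toIntLinearMap (M := Additive (Stmt10Aux.U (K := K) g)) (M₂ := Additive ((𝓞 K)ˣ ⧸ NumberField.Units.torsion K)) ι))
      (NumberField.Units.basisModTorsion K) bN
  let eqv : Additive (Stmt10Aux.U (K := K) g) ≃ₗ[ℤ] LinearMap.range (AddMonoidHom.toIntLinearMap (M := Additive (Stmt10Aux.U (K := K) g)) (M₂ := Additive ((𝓞 K)ˣ ⧸ NumberField.Units.torsion K)) ι) :=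
    LinearEquiv.ofInjective (AddMonoidHom.toIntLinearMap (M := Additive (Stmt10Aux.U (K := K) g)) (M₂ := Additive ((𝓞 K)ˣ ⧸ NumberField.Units.torsion K)) ι) hιinj
  let u : Fin m → Additive (Stmt10Aux.U (K := K) g) := fun i => eqv.symm (bN i)
  have hrepr : ∀ a0 : Additive (Stmt10Aux.U (K := K) g),
      a0 = ∑ i, (bN.repr (eqv a0) i) • u i := by
    intro a0
    have hsum := bN.sum_repr (eqv a0)
    calc a0 = eqv.symm (eqv a0) := (eqv.symm_apply_apply a0).symm
      _ = eqv.symm (∑ i, (bN.repr (eqv a0) i) • bN i) := by rw [hsum]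
      _ = ∑ i, (bN.repr (eqv a0) i) • u i := by
          rw [map_sum]
          try simp only [map_smul]
          rfl
  haveI : NeZero p := ⟨hp.pos.ne'⟩
  let F : (Fin m → ZMod p) → (𝓞 K ⧸ Ideal.span {(p : 𝓞 K)}) :=
    fun a => ∑ i, (((a i).val : ℤ)) • φ (u i)
  have hF : Function.Surjective F := by
    intro v
    obtain ⟨a0, ha0⟩ := hφsurj v
    refine ⟨fun i => ((bN.repr (eqv a0) i : ℤ) : ZMod p), ?_⟩
    have hterm : ∀ i : Fin m,
        (((((bN.repr (eqv a0) i : ℤ) : ZMod p)).val : ℤ)) • φ (u i)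
          = (bN.repr (eqv a0) i) • φ (u i) := by
      intro i
      set c := bN.repr (eqv a0) i with hcc
      have hdvd : (p : ℤ) ∣ c - (((c : ZMod p)).val : ℤ) := by
        rw [← ZMod.intCast_zmod_eq_zero_iff_dvd]
        push_cast [ZMod.natCast_val, ZMod.cast_id]
        ring
      obtain ⟨k, hk⟩ := hdvd
      have hsub : c • φ (u i) - ((((c : ZMod p)).val : ℤ)) • φ (u i)
          = (c - (((c : ZMod p)).val : ℤ)) • φ (u i) := (sub_smul _ _ _).symm
      rw [hk, mul_comm, mul_smul, hzero, smul_zero] at hsub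
      exact (sub_eq_zero.mp hsub).symm
    calc F (fun i => ((bN.repr (eqv a0) i : ℤ) : ZMod p))
        = ∑ i, (bN.repr (eqv a0) i) • φ (u i) := Finset.sum_congr rfl (fun i _ => hterm i)
      _ = φ (∑ i, (bN.repr (eqv a0) i) • u i) := by
          rw [map_sum]
          simp_rw [map_zsmul]
      _ = φ a0 := by rw [← hrepr a0]
      _ = v := ha0
  -- cardinality bounds
  have hcard1 : Nat.card (𝓞 K ⧸ Ideal.span {(p : 𝓞 K)}) ≤ p ^ m := by
    have h9 := Nat.card_le_card_of_surjective F hF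
    simpa [Nat.card_fun, Nat.card_zmod, Nat.card_eq_fintype_card] using h9
  have hcard2 : Nat.card (𝓞 K ⧸ Ideal.span {(p : 𝓞 K)}) = p ^ (Module.finrank ℚ K) := by
    have h2 : Algebra.norm ℤ ((p : 𝓞 K)) = ((p : ℕ) : ℤ) ^ (Module.finrank ℚ K) := by
      have b := RingOfIntegers.basis K
      have h3 := Algebra.norm_algebraMap_of_basis b (((p : ℕ) : ℤ))
      have h4 : Fintype.card (Module.Free.ChooseBasisIndex ℤ (𝓞 K)) = Module.finrank ℚ K := by
        rw [← RingOfIntegers.rank K, Module.finrank_eq_card_chooseBasisIndex]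
      rw [← h4]
      simpa using h3
    have h5 : Ideal.absNorm (Ideal.span {(p : 𝓞 K)})
        = ((Algebra.norm ℤ ((p : 𝓞 K))).natAbs) := Ideal.absNorm_span_singleton _
    have h6 : Nat.card (𝓞 K ⧸ Ideal.span {(p : 𝓞 K)})
        = Ideal.absNorm (Ideal.span {(p : 𝓞 K)}) := by
      rw [Ideal.absNorm_apply, Submodule.cardQuot_apply]
    rw [h6, h5, h2]
    simp [Int.natAbs_pow]
  have hfr : 0 < Module.finrank ℚ K := Module.finrank_pos
  have hplaces : Fintype.card (InfinitePlace K) ≤ Module.finrank ℚ K := by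
    have h1 := InfinitePlace.card_eq_nrRealPlaces_add_nrComplexPlaces K
    have h2 := InfinitePlace.card_add_two_mul_card_eq_rank K
    omega
  have hmr : m ≤ Module.finrank ℚ K - 1 := by
    have : NumberField.Units.rank K = Fintype.card (InfinitePlace K) - 1 := rfl
    omega
  have hle : p ^ m ≤ p ^ (Module.finrank ℚ K - 1) :=
    Nat.pow_le_pow_right hp.pos hmr
  have hlt : p ^ (Module.finrank ℚ K - 1) < p ^ (Module.finrank ℚ K) :=
    Nat.pow_lt_pow_right hp.one_lt (by omega)
  omega
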